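/- Let R be a Kähler algebraic curvature tensor with nonnegative orthogonal bisectional curvature on a Hermitian space of dimension n ≥ 2. Then for any unitary frame and any indices α ≠ β, R_{αᾱαᾱ} + R_{ββ̄ββ̄} ≥ 0. (Proof: apply NOB to the orthogonal pairs (e_α−e_β)/2, (e_α+e_β)/2 and (e_α−ie_β)/2, (e_α+ie_β)/2 and add the resulting inequalities.) -/

import Mathlib

noncomputable section

open Complex

/-- A Kähler algebraic curvature tensor on the Hermitian space `ℂⁿ`:
`R x y z w` stands for `R(X, Ȳ, Z, W̄)`; it is complex-linear in the unbarred
slots (1 and 3), conjugate-linear in the barred slots (2 and 4), and satisfies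
the Kähler symmetries `R(X,Ȳ,Z,W̄) = R(Z,Ȳ,X,W̄) = R(Z,W̄,X,Ȳ)` together with
the conjugate symmetry `R(X,Ȳ,Z,W̄) = conj (R(Y,X̄,W,Z̄))`. -/
structure KahlerCurvatureTensor (n : ℕ) where
  R : EuclideanSpace ℂ (Fin n) → EuclideanSpace ℂ (Fin n) →
      EuclideanSpace ℂ (Fin n) → EuclideanSpace ℂ (Fin n) → ℂ
  map_add₁ : ∀ x x' y z w, R (x + x') y z w = R x y z w + R x' y z w
  map_smul₁ : ∀ (c : ℂ) x y z w, R (c • x) y z w = c * R x y z w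
  map_add₂ : ∀ x y y' z w, R x (y + y') z w = R x y z w + R x y' z w
  map_smul₂ : ∀ (c : ℂ) x y z w, R x (c • y) z w = (starRingEnd ℂ) c * R x y z w
  map_add₃ : ∀ x y z z' w, R x y (z + z') w = R x y z w + R x y z' w
  map_smul₃ : ∀ (c : ℂ) x y z w, R x y (c • z) w = c * R x y z w
  map_add₄ : ∀ x y z w w', R x y z (w + w') = R x y z w + R x y z w'
  map_smul₄ : ∀ (c : ℂ) x y z w, R x y z (c • w) = (starRingEnd ℂ) c * R x y z w
  sym₁₃ : ∀ x y z w, R x y z w = R z y x w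
  symPair : ∀ x y z w, R x y z w = R z w x y
  conjSym : ∀ x y z w, R x y z w = (starRingEnd ℂ) (R y x w z)

/-- Nonnegative orthogonal bisectional curvature: `R(X,X̄,Y,Ȳ) ≥ 0` for all
`(1,0)`-vectors `X, Y` with `⟨X, Ȳ⟩ = 0`. -/
def KahlerCurvatureTensor.NOB {n : ℕ} (T : KahlerCurvatureTensor n) : Prop :=
  ∀ x y : EuclideanSpace ℂ (Fin n), (inner ℂ x y : ℂ) = 0 → 0 ≤ (T.R x x y y).re

/-- if a Kähler algebraic curvature tensor (with `n ≥ 2`) has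
nonnegative orthogonal bisectional curvature, then for any unitary frame and
any `α ≠ β`, `R_{αᾱαᾱ} + R_{ββ̄ββ̄} ≥ 0`. -/
theorem nob_sum_holomorphic_sectional_nonneg {n : ℕ} (hn : 2 ≤ n)
    (T : KahlerCurvatureTensor n) (hNOB : T.NOB)
    (e : Fin n → EuclideanSpace ℂ (Fin n)) (he : Orthonormal ℂ e)
    (α β : Fin n) (hαβ : α ≠ β) :
    0 ≤ (T.R (e α) (e α) (e α) (e α)).re + (T.R (e β) (e β) (e β) (e β)).re := by
  set a := e α with ha
  set b := e β with hb
  have haa : (inner ℂ a a : ℂ) = 1 := by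
    simpa [hαβ] using (orthonormal_iff_ite.mp he) α α
  have hbb : (inner ℂ b b : ℂ) = 1 := by
    simpa [hαβ] using (orthonormal_iff_ite.mp he) β β
  have hab : (inner ℂ a b : ℂ) = 0 := by
    simpa [hαβ] using (orthonormal_iff_ite.mp he) α β
  have hba : (inner ℂ b a : ℂ) = 0 := by
    simpa [hαβ.symm] using (orthonormal_iff_ite.mp he) β α
  have ho1 : (inner ℂ (a + (-1 : ℂ) • b) (a + (1 : ℂ) • b) : ℂ) = 0 := by
    simp [inner_add_left, inner_add_right, inner_smul_left, inner_smul_right,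
      haa, hbb, hab, hba, show ‖a‖ = 1 from he.1 α, show ‖b‖ = 1 from he.1 β]
  have ho2 : (inner ℂ (a + (-I) • b) (a + I • b) : ℂ) = 0 := by
    simp [inner_add_left, inner_add_right, inner_smul_left, inner_smul_right,
      haa, hbb, hab, hba, show ‖a‖ = 1 from he.1 α, show ‖b‖ = 1 from he.1 β]
  have h1 := hNOB _ _ ho1
  have h2 := hNOB _ _ ho2
  -- symmetry facts
  have s1 : T.R a b a a = T.R a a a b := T.symPair a b a a
  have s2 : T.R b a a a = T.R a a b a := T.symPair b a a a
  have s3 : T.R a b b b = T.R b b a b := T.symPair a b b b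
  have s4 : T.R b a b b = T.R b b b a := T.symPair b a b b
  have c1 : T.R a a b b = T.R b b a a := T.symPair a a b b
  have c2 : T.R a b b a = T.R b a a b := T.symPair a b b a
  have c3 : T.R a a b b = T.R b a a b := T.sym₁₃ a a b b
  have key : T.R (a + (-1 : ℂ) • b) (a + (-1 : ℂ) • b) (a + (1 : ℂ) • b) (a + (1 : ℂ) • b)
      + T.R (a + (-I) • b) (a + (-I) • b) (a + I • b) (a + I • b)
      = 2 * (T.R a a a a + T.R b b b b) := by
    simp only [T.map_add₁, T.map_add₂, T.map_add₃, T.map_add₄,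
      T.map_smul₁, T.map_smul₂, T.map_smul₃, T.map_smul₄,
      map_neg, map_one, Complex.conj_I]
    linear_combination (-1 + I) * s1 + (-1 - I) * s2 + (-1 + I) * s3 + (-1 - I) * s4
      + (-2 : ℂ) * c1 + (-2 : ℂ) * c2 + (4 : ℂ) * c3
      + (- T.R a a b b - T.R a b a b + T.R a b b a - T.R a b b b * I
         + T.R b a a b - T.R b a b a + T.R b a b b * I - T.R b b a a
         + T.R b b a b * I - T.R b b b a * I + T.R b b b b * (I ^ 2 - 1)) * Complex.I_sq
  have hre : 0 ≤ (2 * (T.R a a a a + T.R b b b b)).re := by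
    rw [← key]; simpa using add_nonneg h1 h2
  simp only [Complex.mul_re, Complex.add_re] at hre
  norm_num at hre
  linarith
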